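/- For each of the special spreads s ∈ {0, 1/4, 1/2, 3/4, 1} and every natural number n, the value Sₙ(s) also lies in {0, 1/4, 1/2, 3/4, 1}. -/
import Mathlib


def spread : ℕ → ℚ → ℚ
  | 0, _ => 0
  | 1, s => s
  | (n + 2), s => 2 * (1 - 2 * s) * spread (n + 1) s - spread n s + 2 * s

lemma spread_rec (n : ℕ) (s : ℚ) :
    spread (n + 2) s = 2 * (1 - 2 * s) * spread (n + 1) s - spread n s + 2 * s := rfl

lemma aux0 (n : ℕ) : spread n 0 = 0 ∧ spread (n + 1) 0 = 0 := by
  induction n with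
  | zero => exact ⟨rfl, rfl⟩
  | succ n ih => exact ⟨ih.2, by rw [spread_rec, ih.1, ih.2]; ring⟩

lemma aux14 (n : ℕ) :
    (spread n (1/4) = 0 ∧ spread (n+1) (1/4) = 1/4) ∨
    (spread n (1/4) = 1/4 ∧ spread (n+1) (1/4) = 3/4) ∨
    (spread n (1/4) = 3/4 ∧ spread (n+1) (1/4) = 1) ∨
    (spread n (1/4) = 1 ∧ spread (n+1) (1/4) = 3/4) ∨
    (spread n (1/4) = 3/4 ∧ spread (n+1) (1/4) = 1/4) ∨
    (spread n (1/4) = 1/4 ∧ spread (n+1) (1/4) = 0) := by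
  induction n with
  | zero => left; exact ⟨rfl, rfl⟩
  | succ n ih =>
    rcases ih with ⟨a, b⟩ | ⟨a, b⟩ | ⟨a, b⟩ | ⟨a, b⟩ | ⟨a, b⟩ | ⟨a, b⟩ <;>
      rw [spread_rec, a, b] <;> norm_num

lemma aux12 (n : ℕ) :
    (spread n (1/2) = 0 ∧ spread (n+1) (1/2) = 1/2) ∨
    (spread n (1/2) = 1/2 ∧ spread (n+1) (1/2) = 1) ∨
    (spread n (1/2) = 1 ∧ spread (n+1) (1/2) = 1/2) ∨
    (spread n (1/2) = 1/2 ∧ spread (n+1) (1/2) = 0) := by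
  induction n with
  | zero => left; exact ⟨rfl, rfl⟩
  | succ n ih =>
    rcases ih with ⟨a, b⟩ | ⟨a, b⟩ | ⟨a, b⟩ | ⟨a, b⟩ <;>
      rw [spread_rec, a, b] <;> norm_num

lemma aux34 (n : ℕ) :
    (spread n (3/4) = 0 ∧ spread (n+1) (3/4) = 3/4) ∨
    (spread n (3/4) = 3/4 ∧ spread (n+1) (3/4) = 3/4) ∨
    (spread n (3/4) = 3/4 ∧ spread (n+1) (3/4) = 0) := by
  induction n with
  | zero => left; exact ⟨rfl, rfl⟩
  | succ n ih =>
    rcases ih with ⟨a, b⟩ | ⟨a, b⟩ | ⟨a, b⟩ <;>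
      rw [spread_rec, a, b] <;> norm_num

lemma aux1 (n : ℕ) :
    (spread n 1 = 0 ∧ spread (n+1) 1 = 1) ∨
    (spread n 1 = 1 ∧ spread (n+1) 1 = 0) := by
  induction n with
  | zero => left; exact ⟨rfl, rfl⟩
  | succ n ih =>
    rcases ih with ⟨a, b⟩ | ⟨a, b⟩ <;> rw [spread_rec, a, b] <;> norm_num

theorem spread_special_spreads (s : ℚ)
    (hs : s ∈ ({0, 1/4, 1/2, 3/4, 1} : Set ℚ)) (n : ℕ) :
    spread n s ∈ ({0, 1/4, 1/2, 3/4, 1} : Set ℚ) := by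
  simp only [Set.mem_insert_iff, Set.mem_singleton_iff] at hs ⊢
  rcases hs with h | h | h | h | h <;> subst h
  · exact Or.inl (aux0 n).1
  · rcases aux14 n with ⟨a, _⟩ | ⟨a, _⟩ | ⟨a, _⟩ | ⟨a, _⟩ | ⟨a, _⟩ | ⟨a, _⟩ <;> rw [a] <;> norm_num
  · rcases aux12 n with ⟨a, _⟩ | ⟨a, _⟩ | ⟨a, _⟩ | ⟨a, _⟩ <;> rw [a] <;> norm_num
  · rcases aux34 n with ⟨a, _⟩ | ⟨a, _⟩ | ⟨a, _⟩ <;> rw [a] <;> norm_num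
  · rcases aux1 n with ⟨a, _⟩ | ⟨a, _⟩ <;> rw [a] <;> norm_num
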